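/- arXiv:2402.16319 — 2 statements merged into one kernel-verified Lean document; each statement's English description precedes it below -/
import Mathlib

section
/- Eckart–Young theorem (spectral norm): for any real matrix A and any matrix A' of rank at most k, the truncated-SVD approximation A_{(k)} satisfies ‖A − A_{(k)}‖₂ ≤ ‖A − A'‖₂, where ‖·‖₂ is the operator (spectral) norm. -/
open Matrix

noncomputable def opNorm {n m : ℕ} (A : Matrix (Fin n) (Fin m) ℝ) : ℝ :=
  ‖LinearMap.toContinuousLinearMap (Matrix.toEuclideanLin A)‖

lemma vecMulVec_mulVec' {n m : ℕ} (u : Fin n → ℝ) (v : Fin m → ℝ) (x : Fin m → ℝ) :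
    vecMulVec u v *ᵥ x = (v ⬝ᵥ x) • u := by
  funext j
  simp [vecMulVec, mulVec, dotProduct, Finset.mul_sum, mul_assoc, mul_comm, mul_left_comm]

lemma sum_mulVec' {r m n : ℕ} (s : Finset (Fin r)) (lam : Fin r → ℝ)
    (u : Fin r → Fin n → ℝ) (v : Fin r → Fin m → ℝ) (x : Fin m → ℝ) :
    (∑ i ∈ s, lam i • vecMulVec (u i) (v i)) *ᵥ x
      = ∑ i ∈ s, (lam i * (v i ⬝ᵥ x)) • u i := by
  funext j
  simp only [Matrix.mulVec, dotProduct, Finset.sum_apply, Pi.smul_apply,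
    Matrix.smul_apply, Matrix.sum_apply, Matrix.vecMulVec_apply, smul_eq_mul,
    Finset.sum_mul, Finset.mul_sum]
  rw [Finset.sum_comm]
  exact Finset.sum_congr rfl fun i _ => Finset.sum_congr rfl fun k _ => by ring

lemma euclid_symm_sum {n : ℕ} {ι : Type*} (s : Finset ι) (c : ι → ℝ) (w : ι → (Fin n → ℝ)) :
    (WithLp.equiv 2 (Fin n → ℝ)).symm (∑ i ∈ s, c i • w i)
      = ∑ i ∈ s, c i • (WithLp.equiv 2 (Fin n → ℝ)).symm (w i) := by
  have h := map_sum ((WithLp.linearEquiv 2 ℝ (Fin n → ℝ)).symm) (fun i => c i • w i) s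
  simp only [_root_.map_smul] at h
  exact h

lemma on_of_dot {m r : ℕ} (v : Fin r → Fin m → ℝ)
    (hv : ∀ i j, v i ⬝ᵥ v j = if i = j then (1 : ℝ) else 0) :
    Orthonormal ℝ (fun i => (WithLp.equiv 2 (Fin m → ℝ)).symm (v i)) := by
  rw [orthonormal_iff_ite]
  intro i j
  simpa [PiLp.inner_apply, RCLike.inner_apply, dotProduct, mul_comm] using hv i j

lemma inner_eq_dot {m : ℕ} (a : Fin m → ℝ) (x : EuclideanSpace ℝ (Fin m)) :
    (inner ℝ ((WithLp.equiv 2 (Fin m → ℝ)).symm a) x : ℝ) = a ⬝ᵥ (WithLp.equiv 2 (Fin m → ℝ)) x := by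
  simp [PiLp.inner_apply, RCLike.inner_apply, dotProduct, mul_comm]

lemma norm_sq_sum {n : ℕ} {ι : Type*} {U : ι → EuclideanSpace ℝ (Fin n)} (hU : Orthonormal ℝ U)
    (s : Finset ι) (c : ι → ℝ) :
    ‖∑ i ∈ s, c i • U i‖ ^ 2 = ∑ i ∈ s, (c i) ^ 2 := by
  rw [← real_inner_self_eq_norm_sq, hU.inner_sum c c s]
  simp [sq]

lemma sq_le_imp {a b : ℝ} (hb : 0 ≤ b) (h : a ^ 2 ≤ b ^ 2) : a ≤ b := by
  nlinarith

/-- Upper bound: op norm of an orthonormal expansion is at most the max coefficient bound. -/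
lemma opNorm_le_of_on {n m r : ℕ} (s : Finset (Fin r)) (lam : Fin r → ℝ)
    (u : Fin r → Fin n → ℝ) (v : Fin r → Fin m → ℝ)
    (hu : ∀ i j, u i ⬝ᵥ u j = if i = j then (1 : ℝ) else 0)
    (hv : ∀ i j, v i ⬝ᵥ v j = if i = j then (1 : ℝ) else 0)
    (σ : ℝ) (hσ0 : 0 ≤ σ) (hσ : ∀ i ∈ s, |lam i| ≤ σ) :
    opNorm (∑ i ∈ s, lam i • vecMulVec (u i) (v i)) ≤ σ := by
  set U : Fin r → EuclideanSpace ℝ (Fin n) := fun i => (WithLp.equiv 2 _).symm (u i)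
  set V : Fin r → EuclideanSpace ℝ (Fin m) := fun i => (WithLp.equiv 2 _).symm (v i)
  have hUo : Orthonormal ℝ U := on_of_dot u hu
  have hVo : Orthonormal ℝ V := on_of_dot v hv
  refine ContinuousLinearMap.opNorm_le_bound _ hσ0 (fun x => ?_)
  set t : Fin r → ℝ := fun i => v i ⬝ᵥ (WithLp.equiv 2 (Fin m → ℝ)) x with ht
  have happ : LinearMap.toContinuousLinearMap
      (Matrix.toEuclideanLin (∑ i ∈ s, lam i • vecMulVec (u i) (v i))) x
      = ∑ i ∈ s, (lam i * t i) • U i := by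
    rw [LinearMap.coe_toContinuousLinearMap', Matrix.toEuclideanLin_apply, sum_mulVec']
    exact euclid_symm_sum _ _ _
  rw [happ]
  refine sq_le_imp (by positivity) ?_
  rw [norm_sq_sum hUo, mul_pow]
  have hbessel : ∑ i ∈ s, (t i) ^ 2 ≤ ‖x‖ ^ 2 := by
    have := hVo.sum_inner_products_le (𝕜 := ℝ) x (s := s)
    have h' : ∑ i ∈ s, (t i) ^ 2 = ∑ i ∈ s, (inner ℝ (V i) x) ^ 2 :=
      Finset.sum_congr rfl fun i _ => congrArg (· ^ 2) (inner_eq_dot (v i) x).symm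
    rw [h']; simpa [Real.norm_eq_abs, sq_abs] using this
  calc ∑ i ∈ s, (lam i * t i) ^ 2 ≤ ∑ i ∈ s, σ ^ 2 * (t i) ^ 2 := by
        refine Finset.sum_le_sum fun i hi => ?_
        rw [mul_pow]
        have h1 : lam i ^ 2 ≤ σ ^ 2 := by
          have := hσ i hi; nlinarith [abs_nonneg (lam i), sq_abs (lam i), le_abs_self (lam i)]
        nlinarith [sq_nonneg (t i)]
    _ = σ ^ 2 * ∑ i ∈ s, (t i) ^ 2 := by rw [Finset.mul_sum]
    _ ≤ σ ^ 2 * ‖x‖ ^ 2 := by nlinarith [sq_nonneg σ]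

lemma lower_bound {n m r k : ℕ} (hkr : k < r)
    (A A' : Matrix (Fin n) (Fin m) ℝ)
    (lam : Fin r → ℝ) (u : Fin r → Fin n → ℝ) (v : Fin r → Fin m → ℝ)
    (hu : ∀ i j, u i ⬝ᵥ u j = if i = j then (1 : ℝ) else 0)
    (hv : ∀ i j, v i ⬝ᵥ v j = if i = j then (1 : ℝ) else 0)
    (hpos : ∀ i, 0 < lam i)
    (hmono : ∀ i j : Fin r, i ≤ j → lam j ≤ lam i)
    (hA : A = ∑ i, lam i • vecMulVec (u i) (v i))
    (hA' : A'.rank ≤ k) :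
    lam ⟨k, hkr⟩ ≤ opNorm (A - A') := by
  classical
  set κ : Fin r := ⟨k, hkr⟩
  set σ : ℝ := lam κ with hσdef
  have hσpos : 0 < σ := hpos κ
  set U : Fin r → EuclideanSpace ℝ (Fin n) := fun i => (WithLp.equiv 2 _).symm (u i)
  set V : Fin r → EuclideanSpace ℝ (Fin m) := fun i => (WithLp.equiv 2 _).symm (v i)
  have hUo : Orthonormal ℝ U := on_of_dot u hu
  have hVo : Orthonormal ℝ V := on_of_dot v hv
  have hkr1 : k + 1 ≤ r := hkr
  have hinj : Function.Injective (Fin.castLE hkr1) := Fin.castLE_injective hkr1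
  have hVo' : Orthonormal ℝ (V ∘ Fin.castLE hkr1) := hVo.comp _ hinj
  set S : Submodule ℝ (EuclideanSpace ℝ (Fin m)) :=
    Submodule.span ℝ (Set.range (V ∘ Fin.castLE hkr1)) with hSdef
  set K : Submodule ℝ (EuclideanSpace ℝ (Fin m)) :=
    LinearMap.ker (Matrix.toEuclideanLin A') with hKdef
  have hfinS : Module.finrank ℝ S = k + 1 := by
    rw [hSdef, finrank_span_eq_card hVo'.linearIndependent]
    simp
  have hrank : A'.rank = Module.finrank ℝ (LinearMap.range (Matrix.toEuclideanLin A')) := by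
    rw [Matrix.toEuclideanLin_eq_toLin]
    exact Matrix.rank_eq_finrank_range_toLin A' _ _
  have hrn : Module.finrank ℝ (LinearMap.range (Matrix.toEuclideanLin A'))
      + Module.finrank ℝ K = m := by
    rw [hKdef]
    rw [LinearMap.finrank_range_add_finrank_ker (Matrix.toEuclideanLin A')]
    simp [finrank_euclideanSpace]
  have hfinK : m - k ≤ Module.finrank ℝ K := by omega
  have hm : Module.finrank ℝ (EuclideanSpace ℝ (Fin m)) = m := by
    simp [finrank_euclideanSpace]
  have hdim : 0 < Module.finrank ℝ (S ⊓ K : Submodule ℝ (EuclideanSpace ℝ (Fin m))) := by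
    have hsup := Submodule.finrank_sup_add_finrank_inf_eq S K
    have hle := Submodule.finrank_le (S ⊔ K)
    have hKm : Module.finrank ℝ K ≤ m := by omega
    have hrank_le : A'.rank ≤ k := hA'
    omega
  have hne : (S ⊓ K : Submodule ℝ (EuclideanSpace ℝ (Fin m))) ≠ ⊥ := by
    intro h
    rw [h, finrank_bot] at hdim
    exact lt_irrefl 0 hdim
  obtain ⟨w, hwSK, hw0⟩ := Submodule.exists_mem_ne_zero_of_ne_bot hne
  have hwS : w ∈ S := hwSK.1
  have hwK : w ∈ K := hwSK.2
  obtain ⟨c, hc⟩ := (Submodule.mem_span_range_iff_exists_fun (R := ℝ)).mp hwS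
  set t : Fin r → ℝ := fun i => v i ⬝ᵥ (WithLp.equiv 2 (Fin m → ℝ)) w with htdef
  have hct : ∀ j : Fin (k + 1), t (Fin.castLE hkr1 j) = c j := by
    intro j
    have := hVo'.inner_right_fintype (𝕜 := ℝ) c j
    rw [hc] at this
    rw [htdef]
    simp only [← inner_eq_dot]
    exact this
  have hwnorm : ‖w‖ ^ 2 = ∑ j, (c j) ^ 2 := by
    rw [← hc]
    exact norm_sq_sum hVo' Finset.univ c
  -- the image of A - A' on w
  set T := LinearMap.toContinuousLinearMap (Matrix.toEuclideanLin (A - A'))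
  have hTw : T w = ∑ i, (lam i * t i) • U i := by
    show Matrix.toEuclideanLin (A - A') w = _
    rw [map_sub, LinearMap.sub_apply, LinearMap.mem_ker.mp hwK, sub_zero,
      Matrix.toEuclideanLin_apply, hA, sum_mulVec']
    exact euclid_symm_sum _ _ _
  have hTnorm : ‖T w‖ ^ 2 = ∑ i, (lam i * t i) ^ 2 := by
    rw [hTw]; exact norm_sq_sum hUo Finset.univ _
  have hkey : σ ^ 2 * ‖w‖ ^ 2 ≤ ‖T w‖ ^ 2 := by
    rw [hTnorm, hwnorm, Finset.mul_sum]
    have himg : ∑ j : Fin (k + 1), σ ^ 2 * (c j) ^ 2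
        ≤ ∑ j : Fin (k + 1), (lam (Fin.castLE hkr1 j) * t (Fin.castLE hkr1 j)) ^ 2 := by
      refine Finset.sum_le_sum fun j _ => ?_
      rw [hct j, mul_pow]
      have hle : σ ≤ lam (Fin.castLE hkr1 j) := by
        refine hmono _ κ ?_
        exact Fin.mk_le_mk.mpr (Nat.lt_succ_iff.mp j.isLt)
      have hsq : σ ^ 2 ≤ lam (Fin.castLE hkr1 j) ^ 2 := pow_le_pow_left₀ hσpos.le hle 2
      exact mul_le_mul_of_nonneg_right hsq (sq_nonneg _)
    refine himg.trans ?_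
    have himage : ∑ i ∈ Finset.univ.image (Fin.castLE hkr1), (lam i * t i) ^ 2
        = ∑ j : Fin (k + 1), (lam (Fin.castLE hkr1 j) * t (Fin.castLE hkr1 j)) ^ 2 := by
      refine Finset.sum_image ?_
      intro x _ y _ h
      exact hinj h
    refine le_trans (le_of_eq himage.symm) ?_
    refine Finset.sum_le_sum_of_subset_of_nonneg (Finset.subset_univ _) ?_
    intro i _ _
    positivity
  have hwpos : 0 < ‖w‖ := norm_pos_iff.mpr hw0
  have h1 : σ * ‖w‖ ≤ ‖T w‖ := by
    refine sq_le_imp (norm_nonneg _) ?_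
    rw [mul_pow]; exact hkey
  have h2 : ‖T w‖ ≤ ‖T‖ * ‖w‖ := T.le_opNorm w
  have := h1.trans h2
  exact le_of_mul_le_mul_right this hwpos

/-- Eckart–Young theorem (spectral norm): the rank-`k` truncated SVD `A_{(k)}` is a best
rank-`≤ k` approximation of `A` in operator norm. -/
theorem eckart_young_spectral (n m r k : ℕ) (hk : k ≤ r)
    (A A' : Matrix (Fin n) (Fin m) ℝ)
    (lam : Fin r → ℝ) (u : Fin r → Fin n → ℝ) (v : Fin r → Fin m → ℝ)
    (hu : ∀ i j, u i ⬝ᵥ u j = if i = j then (1 : ℝ) else 0)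
    (hv : ∀ i j, v i ⬝ᵥ v j = if i = j then (1 : ℝ) else 0)
    (hpos : ∀ i, 0 < lam i)
    (hmono : ∀ i j : Fin r, i ≤ j → lam j ≤ lam i)
    (hA : A = ∑ i, lam i • vecMulVec (u i) (v i))
    (hA' : A'.rank ≤ k) :
    opNorm (A - ∑ i ∈ Finset.univ.filter (fun i : Fin r => (i : ℕ) < k),
      lam i • vecMulVec (u i) (v i)) ≤ opNorm (A - A') := by
  classical
  rcases Nat.lt_or_ge k r with hkr | hkr
  · have hBm : A - ∑ i ∈ Finset.univ.filter (fun i : Fin r => (i : ℕ) < k),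
        lam i • vecMulVec (u i) (v i)
        = ∑ i ∈ Finset.univ.filter (fun i : Fin r => ¬ (i : ℕ) < k),
          lam i • vecMulVec (u i) (v i) := by
      rw [hA, ← Finset.sum_filter_add_sum_filter_not Finset.univ
        (fun i : Fin r => (i : ℕ) < k) (fun i => lam i • vecMulVec (u i) (v i))]
      exact add_sub_cancel_left _ _
    rw [hBm]
    refine le_trans (opNorm_le_of_on _ lam u v hu hv (lam ⟨k, hkr⟩) (hpos _).le ?_)
      (lower_bound hkr A A' lam u v hu hv hpos hmono hA hA')
    intro i hi
    simp only [Finset.mem_filter, Finset.mem_univ, true_and, not_lt] at hi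
    rw [abs_of_pos (hpos i)]
    exact hmono ⟨k, hkr⟩ i hi
  · have hfil : Finset.univ.filter (fun i : Fin r => (i : ℕ) < k) =
        (Finset.univ : Finset (Fin r)) :=
      Finset.filter_true_of_mem fun i _ => lt_of_lt_of_le i.isLt hkr
    rw [hfil, ← hA, sub_self]
    have h0 : opNorm (0 : Matrix (Fin n) (Fin m) ℝ) = 0 := by
      unfold opNorm
      rw [map_zero, map_zero, norm_zero]
    rw [h0]
    unfold opNorm
    exact norm_nonneg _
end

section
/- Eckart–Young theorem (Frobenius norm): for any real matrix A and any matrix A' of rank at most k, ‖A − A_{(k)}‖_F ≤ ‖A − A'‖_F, where A_{(k)} is the rank-k truncated SVD of A. -/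
open Matrix

set_option maxHeartbeats 1000000

/-- The Frobenius norm of a real rectangular matrix. -/
noncomputable def frobNorm {n m : ℕ} (A : Matrix (Fin n) (Fin m) ℝ) : ℝ :=
  Real.sqrt (∑ i, ∑ j, (A i j)^2)

lemma exists_onb_cols {n m k : ℕ} (A' : Matrix (Fin n) (Fin m) ℝ) (hA' : A'.rank ≤ k) :
    ∃ (d : ℕ) (w : Fin d → Fin n → ℝ), d ≤ k ∧
      (∀ i j, w i ⬝ᵥ w j = if i = j then (1:ℝ) else 0) ∧
      (∀ j, (∑ l, (w l ⬝ᵥ (fun i => A' i j)) • w l) = fun i => A' i j) := by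
  classical
  set col : Fin m → EuclideanSpace ℝ (Fin n) := fun j => WithLp.toLp 2 (fun i => A' i j) with hcol
  set S : Submodule ℝ (EuclideanSpace ℝ (Fin n)) := Submodule.span ℝ (Set.range col) with hS
  have hrank : A'.rank = Module.finrank ℝ S := by
    rw [A'.rank_eq_finrank_span_cols, hS]
    let e : (Fin n → ℝ) ≃ₗ[ℝ] EuclideanSpace ℝ (Fin n) := (WithLp.linearEquiv 2 ℝ (Fin n → ℝ)).symm
    have hmap : Submodule.span ℝ (Set.range col)
        = (Submodule.span ℝ (Set.range A'.col)).map (e : (Fin n → ℝ) →ₗ[ℝ] EuclideanSpace ℝ (Fin n)) := by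
      rw [Submodule.map_span, ← Set.range_comp]
      rfl
    rw [hmap, LinearEquiv.finrank_map_eq]
  set d := Module.finrank ℝ S with hd
  have hdk : d ≤ k := by rw [← hrank] at *; exact hA'
  have : FiniteDimensional ℝ S := FiniteDimensional.finiteDimensional_submodule S
  let B : OrthonormalBasis (Fin d) ℝ S := stdOrthonormalBasis ℝ S
  refine ⟨d, fun l => ((B l : EuclideanSpace ℝ (Fin n)) : Fin n → ℝ), hdk, ?_, ?_⟩
  · intro i j
    have := orthonormal_iff_ite.mp B.orthonormal i j
    rw [Submodule.coe_inner] at this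
    rw [← this]
    simp [PiLp.inner_apply, RCLike.inner_apply, dotProduct, mul_comm]
  · intro j
    have hmem : col j ∈ S := Submodule.subset_span ⟨j, rfl⟩
    have h := B.sum_repr' ⟨col j, hmem⟩
    have h2 := congrArg (Subtype.val) h
    have h3 : (∑ l, ((inner ℝ (B l) (⟨col j, hmem⟩ : S) : ℝ)) • (B l : EuclideanSpace ℝ (Fin n))) = col j := by
      simpa using h2
    have h4 : ∀ l, ((B l : EuclideanSpace ℝ (Fin n)) ⬝ᵥ col j) = (inner ℝ (B l) (⟨col j, hmem⟩ : S) : ℝ) := by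
      intro l; rw [Submodule.coe_inner]
      simp [PiLp.inner_apply, RCLike.inner_apply, dotProduct, mul_comm]
    have h5 := congrArg (WithLp.linearEquiv 2 ℝ (Fin n → ℝ)) h3
    rw [map_sum] at h5
    simp only [_root_.map_smul, WithLp.linearEquiv_apply] at h5
    funext i
    have h6 := congrFun h5 i
    simp only [Finset.sum_apply, Pi.smul_apply, smul_eq_mul] at h6
    have h7 : ((fun l => ((B l : EuclideanSpace ℝ (Fin n)) : Fin n → ℝ)) : Fin d → Fin n → ℝ) = fun l => WithLp.equiv 2 (Fin n → ℝ) (B l) := rfl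
    simp only [Finset.sum_apply, Pi.smul_apply, smul_eq_mul]
    calc ∑ l, ((B l : EuclideanSpace ℝ (Fin n)) ⬝ᵥ fun i => A' i j) * (B l : EuclideanSpace ℝ (Fin n)) i
        = ∑ l, (inner ℝ (B l) (⟨col j, hmem⟩ : S) : ℝ) * (WithLp.equiv 2 (Fin n → ℝ) (B l)) i := by
          refine Finset.sum_congr rfl fun l _ => ?_
          rw [h4 l]; rfl
      _ = (WithLp.equiv 2 (Fin n → ℝ)) (col j) i := h6
      _ = A' i j := rfl

lemma dot_sum_smul {N d : ℕ} (x : Fin N → ℝ) (c : Fin d → ℝ) (w : Fin d → Fin N → ℝ) :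
    x ⬝ᵥ (∑ l, c l • w l) = ∑ l, c l * (x ⬝ᵥ w l) := by
  simp only [dotProduct, Finset.sum_apply, Pi.smul_apply, smul_eq_mul, Finset.mul_sum,
    Finset.sum_mul]
  rw [Finset.sum_comm]
  exact Finset.sum_congr rfl fun l _ => Finset.sum_congr rfl fun i _ => by ring

lemma sum_sq_orthonormal {m r : ℕ} (v : Fin r → Fin m → ℝ)
    (hv : ∀ i j, v i ⬝ᵥ v j = if i = j then (1:ℝ) else 0) (c : Fin r → ℝ) :
    ∑ j, (∑ i, c i * v i j)^2 = ∑ i, (c i)^2 := by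
  have h1 : ∀ j : Fin m, (∑ i, c i * v i j)^2 = ∑ a, ∑ b, c a * c b * (v a j * v b j) := by
    intro j
    rw [sq, Finset.sum_mul_sum]
    exact Finset.sum_congr rfl fun a _ => Finset.sum_congr rfl fun b _ => by ring
  calc ∑ j, (∑ i, c i * v i j)^2
      = ∑ a, ∑ b, c a * c b * (v a ⬝ᵥ v b) := by
        simp_rw [h1, dotProduct, Finset.mul_sum]
        rw [Finset.sum_comm]
        exact Finset.sum_congr rfl fun a _ => Finset.sum_comm
    _ = ∑ a, (c a)^2 := by
        simp [hv, mul_ite, Finset.sum_ite_eq, sq]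

lemma bessel {N d : ℕ} (w : Fin d → Fin N → ℝ)
    (hw : ∀ i j, w i ⬝ᵥ w j = if i = j then (1:ℝ) else 0) (x : Fin N → ℝ) :
    ∑ l, (w l ⬝ᵥ x)^2 ≤ x ⬝ᵥ x := by
  set p : Fin N → ℝ := ∑ l, (w l ⬝ᵥ x) • w l with hp
  have hxp : x ⬝ᵥ p = ∑ l, (w l ⬝ᵥ x)^2 := by
    rw [hp, dot_sum_smul]
    exact Finset.sum_congr rfl fun l _ => by rw [dotProduct_comm x (w l)]; ring
  have hpp : p ⬝ᵥ p = ∑ l, (w l ⬝ᵥ x)^2 := by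
    rw [hp, dot_sum_smul]
    refine Finset.sum_congr rfl fun l _ => ?_
    have : (∑ l', (w l' ⬝ᵥ x) • w l') ⬝ᵥ w l = ∑ l', (w l' ⬝ᵥ x) * (w l' ⬝ᵥ w l) := by
      rw [dotProduct_comm, dot_sum_smul]
      exact Finset.sum_congr rfl fun l' _ => by rw [dotProduct_comm (w l) (w l')]
    rw [this]
    simp [hw, mul_ite, Finset.sum_ite_eq', sq]
  have hnn : 0 ≤ (x - p) ⬝ᵥ (x - p) := by
    rw [dotProduct]
    exact Finset.sum_nonneg fun i _ => mul_self_nonneg _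
  rw [sub_dotProduct, dotProduct_sub, dotProduct_sub, dotProduct_comm p x] at hnn
  linarith [hxp, hpp]

lemma proj_lower {N d : ℕ} (w : Fin d → Fin N → ℝ)
    (hw : ∀ i j, w i ⬝ᵥ w j = if i = j then (1:ℝ) else 0) (x y : Fin N → ℝ)
    (hy : (∑ l, (w l ⬝ᵥ y) • w l) = y) :
    x ⬝ᵥ x - ∑ l, (w l ⬝ᵥ x)^2 ≤ (x - y) ⬝ᵥ (x - y) := by
  have hxy : x ⬝ᵥ y = ∑ l, (w l ⬝ᵥ y) * (w l ⬝ᵥ x) := by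
    conv_lhs => rw [← hy]
    rw [dot_sum_smul]
    exact Finset.sum_congr rfl fun l _ => by rw [dotProduct_comm x (w l)]
  have hyy : y ⬝ᵥ y = ∑ l, (w l ⬝ᵥ y)^2 := by
    conv_lhs => rw [← hy]
    rw [dotProduct_comm, dot_sum_smul]
    exact Finset.sum_congr rfl fun l _ => by rw [hy, dotProduct_comm y (w l)]; ring
  have key : ∑ l, ((w l ⬝ᵥ x) - (w l ⬝ᵥ y))^2 ≥ 0 :=
    Finset.sum_nonneg fun l _ => sq_nonneg _
  have hexp : ∑ l, ((w l ⬝ᵥ x) - (w l ⬝ᵥ y))^2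
      = ∑ l, (w l ⬝ᵥ x)^2 - 2 * ∑ l, ((w l ⬝ᵥ y) * (w l ⬝ᵥ x)) + ∑ l, (w l ⬝ᵥ y)^2 := by
    rw [Finset.mul_sum, ← Finset.sum_sub_distrib, ← Finset.sum_add_distrib]
    exact Finset.sum_congr rfl fun l _ => by ring
  rw [sub_dotProduct, dotProduct_sub, dotProduct_sub, dotProduct_comm y x]
  linarith [key, hexp, hxy, hyy]

lemma abel_bound {r k : ℕ} (hk : k ≤ r) (μ t : Fin r → ℝ)
    (hμ0 : ∀ i, 0 ≤ μ i) (hμm : ∀ i j : Fin r, i ≤ j → μ j ≤ μ i)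
    (ht0 : ∀ i, 0 ≤ t i) (ht1 : ∀ i, t i ≤ 1) (hts : ∑ i, t i ≤ (k:ℝ)) :
    ∑ i, μ i * t i ≤ ∑ i ∈ Finset.univ.filter (fun i : Fin r => (i : ℕ) < k), μ i := by
  rcases eq_or_lt_of_le hk with heq | hlt
  · have hfil : Finset.univ.filter (fun i : Fin r => (i : ℕ) < k) = Finset.univ := by
      ext i; simp only [Finset.mem_filter, Finset.mem_univ, true_and, iff_true]
      exact heq ▸ i.isLt
    rw [hfil]
    exact Finset.sum_le_sum fun i _ => by nlinarith [hμ0 i, ht1 i]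
  · set κ : Fin r := ⟨k, hlt⟩ with hκ
    set c := μ κ with hc
    have hc0 : 0 ≤ c := hμ0 κ
    have hcard : (Finset.univ.filter (fun i : Fin r => (i : ℕ) < k)).card = k := by
      have : Finset.univ.filter (fun i : Fin r => (i : ℕ) < k) = Finset.Iio κ := by
        ext i
        simp only [Finset.mem_filter, Finset.mem_univ, true_and, Finset.mem_Iio, Fin.lt_def, hκ]
      rw [this, Fin.card_Iio]
    have hpt : ∀ i : Fin r, μ i * t i - (if (i : ℕ) < k then μ i else 0)
        ≤ c * t i - (if (i : ℕ) < k then c else 0) := by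
      intro i
      by_cases h : (i : ℕ) < k
      · simp only [h, if_pos]
        have hμi : c ≤ μ i := hμm i κ (by simp [Fin.le_def, hκ]; omega)
        nlinarith [ht1 i]
      · simp only [h, if_neg, not_false_iff, sub_zero]
        have hμi : μ i ≤ c := hμm κ i (by simp [Fin.le_def, hκ]; omega)
        nlinarith [ht0 i]
    have hsum := Finset.sum_le_sum (fun i (_ : i ∈ Finset.univ) => hpt i)
    rw [Finset.sum_sub_distrib, Finset.sum_sub_distrib] at hsum
    have h1 : ∑ i : Fin r, (if (i : ℕ) < k then μ i else 0)
        = ∑ i ∈ Finset.univ.filter (fun i : Fin r => (i : ℕ) < k), μ i :=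
      (Finset.sum_filter _ _).symm
    have h2 : ∑ i : Fin r, (if (i : ℕ) < k then c else 0) = c * k := by
      rw [← Finset.sum_filter, Finset.sum_const, hcard]
      simp [mul_comm]
    have h3 : ∑ i : Fin r, c * t i = c * ∑ i, t i := by rw [Finset.mul_sum]
    rw [h1, h2, h3] at hsum
    nlinarith [hsum, hc0, hts]

lemma f_sum {n m r : ℕ} (lam : Fin r → ℝ) (u : Fin r → Fin n → ℝ) (v : Fin r → Fin m → ℝ)
    (hu : ∀ i j, u i ⬝ᵥ u j = if i = j then (1 : ℝ) else 0)
    (hv : ∀ i j, v i ⬝ᵥ v j = if i = j then (1 : ℝ) else 0)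
    (hortho : ∀ (w : Fin r → Fin m → ℝ), (∀ i j, w i ⬝ᵥ w j = if i = j then (1:ℝ) else 0) →
      ∀ (c : Fin r → ℝ), ∑ j, (∑ i, c i * w i j)^2 = ∑ i, (c i)^2)
    (s : Finset (Fin r)) :
    ∑ i, ∑ j, ((∑ a ∈ s, lam a • vecMulVec (u a) (v a)) i j)^2 = ∑ a ∈ s, (lam a)^2 := by
  have hentry : ∀ (i : Fin n) (j : Fin m),
      (∑ a ∈ s, lam a • vecMulVec (u a) (v a)) i j
        = ∑ a, (if a ∈ s then lam a * u a i else 0) * v a j := by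
    intro i j
    rw [Matrix.sum_apply]
    calc ∑ a ∈ s, (lam a • vecMulVec (u a) (v a)) i j
        = ∑ a ∈ s, lam a * u a i * v a j := by
          refine Finset.sum_congr rfl fun a _ => ?_
          simp [vecMulVec_apply, Matrix.smul_apply]; ring
      _ = ∑ a, if a ∈ s then lam a * u a i * v a j else 0 := by
          rw [Finset.sum_ite_mem, Finset.univ_inter]
      _ = ∑ a, (if a ∈ s then lam a * u a i else 0) * v a j := by
          simp [ite_mul, zero_mul]
  simp_rw [hentry]
  have h2 := fun i : Fin n => hortho v hv (fun a => if a ∈ s then lam a * u a i else 0)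
  simp_rw [h2]
  rw [Finset.sum_comm]
  have h3 : ∀ a : Fin r, ∑ i, (if a ∈ s then lam a * u a i else 0)^2
      = if a ∈ s then (lam a)^2 else 0 := by
    intro a
    by_cases h : a ∈ s
    · simp only [h, if_pos]
      have huu : ∑ i, u a i * u a i = 1 := by
        have := hu a a; simp only [if_pos rfl] at this; exact this
      calc ∑ i, (lam a * u a i)^2 = (lam a)^2 * ∑ i, (u a i * u a i) := by
            rw [Finset.mul_sum]
            exact Finset.sum_congr rfl fun i _ => by ring
        _ = (lam a)^2 := by rw [huu, mul_one]
    · simp [h]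
  simp_rw [h3]
  rw [Finset.sum_ite_mem, Finset.univ_inter]

/-- Eckart–Young theorem (Frobenius norm): the rank-`k` truncated SVD `A_{(k)}` is a best
rank-`≤ k` approximation of `A` in Frobenius norm. -/
theorem eckart_young_frobenius (n m r k : ℕ) (hk : k ≤ r)
    (A A' : Matrix (Fin n) (Fin m) ℝ)
    (lam : Fin r → ℝ) (u : Fin r → Fin n → ℝ) (v : Fin r → Fin m → ℝ)
    (hu : ∀ i j, u i ⬝ᵥ u j = if i = j then (1 : ℝ) else 0)
    (hv : ∀ i j, v i ⬝ᵥ v j = if i = j then (1 : ℝ) else 0)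
    (hpos : ∀ i, 0 < lam i)
    (hmono : ∀ i j : Fin r, i ≤ j → lam j ≤ lam i)
    (hA : A = ∑ i, lam i • vecMulVec (u i) (v i))
    (hA' : A'.rank ≤ k) :
    frobNorm (A - ∑ i ∈ Finset.univ.filter (fun i : Fin r => (i : ℕ) < k),
      lam i • vecMulVec (u i) (v i)) ≤ frobNorm (A - A') := by
  classical
  obtain ⟨d, w, hdk, hw, hwcol⟩ := exists_onb_cols A' hA'
  set s := Finset.univ.filter (fun i : Fin r => (i : ℕ) < k) with hs
  set xcol : Fin m → Fin n → ℝ := fun j i => A i j with hxcol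
  set ycol : Fin m → Fin n → ℝ := fun j i => A' i j with hycol
  set t : Fin r → ℝ := fun a => ∑ l, (w l ⬝ᵥ u a)^2 with hts'
  have hf := f_sum lam u v hu hv (fun w' hw' c => sum_sq_orthonormal w' hw' c)
  -- value of the LHS
  have hsplit : A - ∑ i ∈ s, lam i • vecMulVec (u i) (v i)
      = ∑ i ∈ sᶜ, lam i • vecMulVec (u i) (v i) := by
    rw [hA, ← Finset.sum_add_sum_compl s fun i => lam i • vecMulVec (u i) (v i)]
    exact add_sub_cancel_left _ _
  have hL : ∑ i, ∑ j, ((A - ∑ i ∈ s, lam i • vecMulVec (u i) (v i)) i j)^2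
      = ∑ a ∈ sᶜ, (lam a)^2 := by rw [hsplit]; exact hf sᶜ
  -- RHS as columns
  have hR : ∑ i, ∑ j, ((A - A') i j)^2
      = ∑ j, ((xcol j - ycol j) ⬝ᵥ (xcol j - ycol j)) := by
    rw [Finset.sum_comm]
    refine Finset.sum_congr rfl fun j _ => ?_
    simp [dotProduct, Matrix.sub_apply, sq, hxcol, hycol]
  -- column sums of A
  have SA : ∑ j, xcol j ⬝ᵥ xcol j = ∑ a, (lam a)^2 := by
    have h := hf Finset.univ
    rw [← hA] at h
    rw [← h, Finset.sum_comm]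
    refine Finset.sum_congr rfl fun j _ => ?_
    simp [dotProduct, sq, hxcol]
  -- projections of columns of A
  have SW : ∀ l, ∑ j, (w l ⬝ᵥ xcol j)^2 = ∑ a, (lam a * (w l ⬝ᵥ u a))^2 := by
    intro l
    have hconv : ∀ j, w l ⬝ᵥ xcol j = ∑ a, (lam a * (w l ⬝ᵥ u a)) * v a j := by
      intro j
      calc w l ⬝ᵥ xcol j = ∑ i, w l i * (∑ a, lam a * (u a i * v a j)) := by
            refine Finset.sum_congr rfl fun i _ => ?_
            congr 1
            show A i j = _
            rw [hA, Matrix.sum_apply]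
            exact Finset.sum_congr rfl fun a _ => by
              simp [vecMulVec_apply, Matrix.smul_apply, mul_assoc]
        _ = ∑ a, (lam a * (w l ⬝ᵥ u a)) * v a j := by
            simp_rw [Finset.mul_sum]
            rw [Finset.sum_comm]
            refine Finset.sum_congr rfl fun a _ => ?_
            simp only [dotProduct, Finset.mul_sum, Finset.sum_mul]
            exact Finset.sum_congr rfl fun i _ => by ring
    simp_rw [hconv]
    exact sum_sq_orthonormal v hv _
  have SWsum : ∑ j, ∑ l, (w l ⬝ᵥ xcol j)^2 = ∑ a, (lam a)^2 * t a := by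
    rw [Finset.sum_comm]
    simp_rw [SW]
    rw [Finset.sum_comm]
    refine Finset.sum_congr rfl fun a _ => ?_
    rw [Finset.mul_sum]
    exact Finset.sum_congr rfl fun l _ => by rw [mul_pow]
  have ht1 : ∀ a, t a ≤ 1 := by
    intro a
    have h := bessel w hw (u a)
    have huu := hu a a
    simp only [if_pos rfl] at huu
    rw [huu] at h
    exact h
  have ht0 : ∀ a, 0 ≤ t a := fun a => Finset.sum_nonneg fun l _ => sq_nonneg _
  have htsum : ∑ a, t a ≤ (k : ℝ) := by
    calc ∑ a, t a = ∑ l, ∑ a, (u a ⬝ᵥ w l)^2 := by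
          rw [Finset.sum_comm]
          exact Finset.sum_congr rfl fun l _ => Finset.sum_congr rfl fun a _ => by
            rw [dotProduct_comm]
      _ ≤ ∑ l : Fin d, (w l ⬝ᵥ w l) := Finset.sum_le_sum fun l _ => bessel u hu (w l)
      _ = ∑ l : Fin d, (1:ℝ) := Finset.sum_congr rfl fun l _ => by
            have := hw l l; simpa using this
      _ = (d : ℝ) := by simp
      _ ≤ (k : ℝ) := by exact_mod_cast hdk
  have habel := abel_bound hk (fun a => (lam a)^2) t
    (fun a => sq_nonneg _)
    (fun i j hij => pow_le_pow_left₀ (le_of_lt (hpos j)) (hmono i j hij) 2)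
    ht0 ht1 htsum
  have hperj : ∑ j, (xcol j ⬝ᵥ xcol j - ∑ l, (w l ⬝ᵥ xcol j)^2)
      ≤ ∑ j, ((xcol j - ycol j) ⬝ᵥ (xcol j - ycol j)) :=
    Finset.sum_le_sum fun j _ => proj_lower w hw (xcol j) (ycol j) (hwcol j)
  rw [Finset.sum_sub_distrib, SA, SWsum] at hperj
  have hcompl : ∑ a ∈ s, (lam a)^2 + ∑ a ∈ sᶜ, (lam a)^2 = ∑ a, (lam a)^2 :=
    Finset.sum_add_sum_compl s _
  unfold frobNorm
  apply Real.sqrt_le_sqrt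
  rw [hL, hR]
  simp only [hs] at habel ⊢
  linarith [habel, hperj, hcompl]
end
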